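/- Let X and Y be independent nonnegative real random variables such that X has the Fisher-Snedecor F density with parameters (m₁, m_{s1}, Ω₁) and Y has the Fisher-Snedecor F density with parameters (m₂, m_{s2}, Ω₂), where m₁, m₂ > 0, m_{s1}, m_{s2} > 1 and Ω₁, Ω₂ > 0. Then the expectation of W = √X · √Y equals E[W] = [B(m₁+1/2, m_{s1}−1/2) · B(m₂+1/2, m_{s2}−1/2) / (B(m₁, m_{s1}) · B(m₂, m_{s2}))] · (m₁·m₂ / ((m_{s1}−1)(m_{s2}−1)·Ω₁·Ω₂))^{−1/2}. (Mean of the per-element cascaded channel amplitude W_n, Appendix A.) -/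

import Mathlib

open MeasureTheory ProbabilityTheory Real Set
open scoped NNReal ENNReal

/-- Euler Beta function B(p,q) = Γ(p)Γ(q)/Γ(p+q). -/
noncomputable def eulerBeta (p q : ℝ) : ℝ := Real.Gamma p * Real.Gamma q / Real.Gamma (p + q)

/-- The Fisher-Snedecor F density with fading parameter m, shadowing parameter m_s
and mean power Ω. -/
noncomputable def fisherF (m ms Ω x : ℝ) : ℝ :=
  m ^ m * ((ms - 1) * Ω) ^ ms * x ^ (m - 1) /
    (eulerBeta m ms * (m * x + (ms - 1) * Ω) ^ (m + ms))

lemma eulerBeta_pos {p q : ℝ} (hp : 0 < p) (hq : 0 < q) : 0 < eulerBeta p q := by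
  unfold eulerBeta
  have := Real.Gamma_pos_of_pos hp
  have := Real.Gamma_pos_of_pos hq
  have := Real.Gamma_pos_of_pos (add_pos hp hq)
  positivity

lemma fisherF_pos {m ms Ω x : ℝ} (hm : 0 < m) (hms : 1 < ms) (hΩ : 0 < Ω) (hx : 0 < x) :
    0 < fisherF m ms Ω x := by
  have hB := eulerBeta_pos hm (show (0:ℝ) < ms by linarith)
  have h1 : (0:ℝ) < ms - 1 := by linarith
  rw [fisherF]
  positivity

lemma fisherF_meas (m ms Ω : ℝ) : Measurable (fun x => fisherF m ms Ω x) := by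
  unfold fisherF
  fun_prop

lemma beta_int {p q : ℝ} (hp : 0 < p) (hq : 0 < q) :
    ∫ t in (0:ℝ)..1, t ^ (p-1) * (1-t) ^ (q-1) = eulerBeta p q := by
  have h := Complex.Gamma_mul_Gamma_eq_betaIntegral (s := (p:ℂ)) (t := (q:ℂ))
    (by simpa using hp) (by simpa using hq)
  have hcoe : Complex.betaIntegral (p:ℂ) (q:ℂ)
      = ((∫ t in (0:ℝ)..1, t ^ (p-1) * (1-t) ^ (q-1) : ℝ) : ℂ) := by
    rw [Complex.betaIntegral, ← intervalIntegral.integral_ofReal]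
    refine intervalIntegral.integral_congr fun x hx => ?_
    rw [uIcc_of_le zero_le_one] at hx
    rw [show ((p:ℂ)-1) = ((p-1:ℝ):ℂ) by push_cast; ring,
        show ((q:ℂ)-1) = ((q-1:ℝ):ℂ) by push_cast; ring,
        show (1 - (x:ℂ)) = ((1-x:ℝ):ℂ) by push_cast; ring,
        ← Complex.ofReal_cpow hx.1, ← Complex.ofReal_cpow (by linarith [hx.2] : (0:ℝ) ≤ 1 - x),
        ← Complex.ofReal_mul]
  rw [hcoe, ← Complex.ofReal_add, Complex.Gamma_ofReal, Complex.Gamma_ofReal,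
    Complex.Gamma_ofReal, ← Complex.ofReal_mul, ← Complex.ofReal_mul] at h
  have h' := Complex.ofReal_injective h
  have hG : Real.Gamma (p+q) ≠ 0 := (Real.Gamma_pos_of_pos (add_pos hp hq)).ne'
  unfold eulerBeta
  field_simp
  linarith [h']

lemma beta_Ioi {p q : ℝ} (hp : 0 < p) (hq : 0 < q) :
    ∫ x in Ioi (0:ℝ), x ^ (p-1) * (1+x) ^ (-(p+q)) = eulerBeta p q := by
  have himg : (fun t : ℝ => t / (1 - t)) '' Ioo (0:ℝ) 1 = Ioi 0 := by
    ext y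
    constructor
    · rintro ⟨t, ⟨ht0, ht1⟩, rfl⟩
      exact div_pos ht0 (by linarith)
    · intro hy
      have hy' : (0:ℝ) < y := hy
      refine ⟨y / (1 + y), ⟨div_pos hy' (by linarith),
        (div_lt_one (by linarith)).mpr (by linarith)⟩, ?_⟩
      have h1y : (1:ℝ) + y ≠ 0 := by positivity
      field_simp
      ring
  have hinj : InjOn (fun t : ℝ => t / (1 - t)) (Ioo 0 1) := by
    rintro a ⟨ha0, ha1⟩ b ⟨hb0, hb1⟩ h
    have ha : (1:ℝ) - a ≠ 0 := by linarith
    have hb : (1:ℝ) - b ≠ 0 := by linarith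
    field_simp at h
    linarith
  have hderiv : ∀ t ∈ Ioo (0:ℝ) 1,
      HasDerivWithinAt (fun t : ℝ => t / (1 - t)) (((1-t)^2)⁻¹) (Ioo 0 1) t := by
    intro t ht
    have h1 : (1:ℝ) - t ≠ 0 := by linarith [ht.2]
    have := (hasDerivAt_id t).div ((hasDerivAt_const t (1:ℝ)).sub (hasDerivAt_id t)) h1
    convert this.hasDerivWithinAt using 1
    · rfl
    · rfl
    · rfl
    · simp only [Pi.sub_apply, id]
      field_simp
      ring
  rw [← himg, integral_image_eq_integral_abs_deriv_smul measurableSet_Ioo hderiv hinj]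
  rw [← beta_int hp hq, intervalIntegral.integral_of_le zero_le_one,
    MeasureTheory.integral_Ioc_eq_integral_Ioo]
  refine setIntegral_congr_fun measurableSet_Ioo fun t ht => ?_
  obtain ⟨ht0, ht1⟩ := ht
  have h1 : (0:ℝ) < 1 - t := by linarith
  rw [smul_eq_mul, show (1 + t/(1-t)) = (1-t)⁻¹ by field_simp; ring,
    Real.div_rpow ht0.le h1.le, Real.inv_rpow h1.le, ← Real.rpow_neg h1.le, neg_neg,
    abs_of_pos (by positivity), ← Real.rpow_natCast (1-t) 2, ← Real.rpow_neg h1.le,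
    div_eq_mul_inv, ← Real.rpow_neg h1.le, mul_comm (t ^ (p-1))]
  have e : ((1:ℝ)-t) ^ (-((2:ℕ):ℝ)) * (1-t) ^ (-(p-1)) * (1-t) ^ (p+q) = (1-t) ^ (q-1) := by
    rw [← Real.rpow_add h1, ← Real.rpow_add h1]
    congr 1
    push_cast
    ring
  linear_combination (t ^ (p-1)) * e

lemma beta_scaled {p q a c : ℝ} (hp : 0 < p) (hq : 0 < q) (ha : 0 < a) (hc : 0 < c) :
    ∫ x in Ioi (0:ℝ), x ^ (p-1) * (a*x+c) ^ (-(p+q)) = eulerBeta p q * a ^ (-p) * c ^ (-q) := by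
  have hac : 0 < a / c := div_pos ha hc
  have key : ∀ x ∈ Ioi (0:ℝ), x ^ (p-1) * (a*x+c) ^ (-(p+q))
      = (((a/c) ^ (p-1))⁻¹ * (c ^ (p+q))⁻¹) •
        (fun y : ℝ => y ^ (p-1) * (1+y) ^ (-(p+q))) ((a/c) * x) := by
    intro x hx
    have hx' : (0:ℝ) < x := hx
    have h1 : (1:ℝ) + (a/c) * x = (a*x+c)/c := by field_simp; ring
    have haxc : (0:ℝ) < a*x+c := by positivity
    simp only [smul_eq_mul, h1]
    rw [Real.mul_rpow hac.le hx'.le, Real.div_rpow haxc.le hc.le, div_eq_mul_inv (_ ^ (-(p+q))),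
      ← Real.rpow_neg hc.le]
    have h2 : ((a/c) ^ (p-1) : ℝ) ≠ 0 := by positivity
    have h3 : (c ^ (-(p+q)) : ℝ) ≠ 0 := by positivity
    field_simp
  rw [setIntegral_congr_fun measurableSet_Ioi key, integral_smul,
    integral_comp_mul_left_Ioi (fun y : ℝ => y ^ (p-1) * (1+y) ^ (-(p+q))) 0 hac,
    mul_zero, beta_Ioi hp hq, smul_eq_mul, smul_eq_mul]
  rw [Real.div_rpow ha.le hc.le, Real.rpow_neg ha.le, Real.rpow_neg hc.le,
    Real.rpow_add hc, show p - 1 = p + -1 by ring, Real.rpow_add ha, Real.rpow_add hc,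
    Real.rpow_neg_one, Real.rpow_neg_one]
  have h3 : (0:ℝ) < a ^ p := Real.rpow_pos_of_pos ha p
  have h4 : (0:ℝ) < c ^ p := Real.rpow_pos_of_pos hc p
  have h5 : (0:ℝ) < c ^ q := Real.rpow_pos_of_pos hc q
  field_simp

lemma fisherF_moment {m ms Ω : ℝ} (hm : 0 < m) (hms : 1 < ms) (hΩ : 0 < Ω) :
    ∫ x in Ioi (0:ℝ), Real.sqrt x * fisherF m ms Ω x
      = eulerBeta (m + 1/2) (ms - 1/2) / eulerBeta m ms * ((ms-1)*Ω/m) ^ ((1:ℝ)/2) := by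
  set c := (ms - 1) * Ω with hcdef
  have hc0 : 0 < c := by
    rw [hcdef]
    have : (0:ℝ) < ms - 1 := by linarith
    positivity
  have hB : 0 < eulerBeta m ms := eulerBeta_pos hm (by linarith)
  have hp : 0 < m + 1/2 := by linarith
  have hq : 0 < ms - 1/2 := by linarith
  have key : ∀ x ∈ Ioi (0:ℝ), Real.sqrt x * fisherF m ms Ω x
      = (m ^ m * c ^ ms / eulerBeta m ms) *
        (x ^ ((m+1/2)-1) * (m*x+c) ^ (-((m+1/2)+(ms-1/2)))) := by
    intro x hx
    have hx' : (0:ℝ) < x := hx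
    have hd : (0:ℝ) < m*x + c := by positivity
    have e1 : x ^ ((1:ℝ)/2) * x ^ (m-1) = x ^ ((m+1/2)-1) := by
      rw [← Real.rpow_add hx']; ring_nf
    have e2 : (m*x+c) ^ (-((m+1/2)+(ms-1/2))) = ((m*x+c) ^ (m+ms))⁻¹ := by
      rw [show -((m+1/2)+(ms-1/2)) = -(m+ms) by ring, Real.rpow_neg hd.le]
    rw [fisherF, Real.sqrt_eq_rpow, e2, ← hcdef, ← e1]
    have h1 : ((m*x+c) ^ (m+ms) : ℝ) ≠ 0 := by positivity
    field_simp
  rw [setIntegral_congr_fun measurableSet_Ioi key, integral_const_mul,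
    beta_scaled hp hq hm hc0]
  have a1 : m ^ (-(m+1/2)) = (m ^ m * m ^ ((1:ℝ)/2))⁻¹ := by
    rw [Real.rpow_neg hm.le, Real.rpow_add hm]
  have a2 : c ^ (-(ms-1/2)) = (c ^ ms * (c ^ ((1:ℝ)/2))⁻¹)⁻¹ := by
    rw [Real.rpow_neg hc0.le, show ms - 1/2 = ms + -(1/2) by ring, Real.rpow_add hc0,
      Real.rpow_neg hc0.le]
  rw [a1, a2, Real.div_rpow hc0.le hm.le]
  have h2 : (0:ℝ) < m ^ m := Real.rpow_pos_of_pos hm m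
  have h3 : (0:ℝ) < c ^ ms := Real.rpow_pos_of_pos hc0 ms
  have h4 : (0:ℝ) < m ^ ((1:ℝ)/2) := Real.rpow_pos_of_pos hm _
  have h5 : (0:ℝ) < c ^ ((1:ℝ)/2) := Real.rpow_pos_of_pos hc0 _
  field_simp

lemma aemeasurable_of_map {α : Type*} {mα : MeasurableSpace α} {P : Measure α}
    {X : α → ℝ} {m ms Ω : ℝ} (hm : 0 < m) (hms : 1 < ms) (hΩ : 0 < Ω)
    (hX : Measure.map X P
      = (volume.restrict (Ioi (0:ℝ))).withDensity
          (fun x => ENNReal.ofReal (fisherF m ms Ω x))) :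
    AEMeasurable X P := by
  by_contra h
  rw [Measure.map_of_not_aemeasurable h] at hX
  have hmeas : AEMeasurable (fun x => ENNReal.ofReal (fisherF m ms Ω x))
      (volume.restrict (Ioi (0:ℝ))) :=
    ((fisherF_meas m ms Ω).ennreal_ofReal).aemeasurable
  have h0 := withDensity_eq_zero hmeas hX.symm
  rw [Filter.EventuallyEq, ae_restrict_iff' measurableSet_Ioi] at h0
  have h1 : ∀ᵐ x : ℝ, x ∉ Ioi (0:ℝ) := by
    filter_upwards [h0] with x hx
    intro hmem
    have hpos := fisherF_pos hm hms hΩ (mem_Ioi.mp hmem)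
    have := hx hmem
    simp only [Pi.zero_apply] at this
    exact absurd this (ENNReal.ofReal_pos.mpr hpos).ne'
  have h2 : volume {x : ℝ | 0 < x} = 0 := by
    simpa [ae_iff] using h1
  rw [(by rfl : {x : ℝ | 0 < x} = Ioi 0), Real.volume_Ioi] at h2
  exact ENNReal.top_ne_zero h2

lemma expect_sqrt {α : Type*} {mα : MeasurableSpace α} {P : Measure α}
    {X : α → ℝ} {m ms Ω : ℝ} (hm : 0 < m) (hms : 1 < ms) (hΩ : 0 < Ω)
    (hXaem : AEMeasurable X P)
    (hX : Measure.map X P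
      = (volume.restrict (Ioi (0:ℝ))).withDensity
          (fun x => ENNReal.ofReal (fisherF m ms Ω x))) :
    ∫ ω, Real.sqrt (X ω) ∂P
      = eulerBeta (m + 1/2) (ms - 1/2) / eulerBeta m ms * ((ms-1)*Ω/m) ^ ((1:ℝ)/2) := by
  rw [← integral_map hXaem Real.continuous_sqrt.aestronglyMeasurable, hX]
  have hd : (fun x => ENNReal.ofReal (fisherF m ms Ω x))
      = fun x => ((Real.toNNReal (fisherF m ms Ω x) : ℝ≥0) : ℝ≥0∞) := rfl
  rw [hd, integral_withDensity_eq_integral_smul (fisherF_meas m ms Ω).real_toNNReal]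
  rw [← fisherF_moment hm hms hΩ]
  refine setIntegral_congr_fun measurableSet_Ioi fun x hx => ?_
  have hpos := fisherF_pos hm hms hΩ (mem_Ioi.mp hx)
  rw [NNReal.smul_def, smul_eq_mul, Real.coe_toNNReal _ hpos.le, mul_comm]

/-- mean of the per-element cascaded channel amplitude W = √X·√Y with
independent Fisher-Snedecor F distributed X and Y. -/
theorem stmt4 {α : Type*} {mα : MeasurableSpace α} (P : Measure α) [IsProbabilityMeasure P]
    (X Y : α → ℝ) (hXY : IndepFun X Y P)
    (hX0 : ∀ᵐ ω ∂P, 0 ≤ X ω) (hY0 : ∀ᵐ ω ∂P, 0 ≤ Y ω)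
    (m₁ m₂ ms₁ ms₂ Ω₁ Ω₂ : ℝ)
    (hm₁ : 0 < m₁) (hm₂ : 0 < m₂) (hms₁ : 1 < ms₁) (hms₂ : 1 < ms₂)
    (hΩ₁ : 0 < Ω₁) (hΩ₂ : 0 < Ω₂)
    (hX : Measure.map X P
      = (volume.restrict (Ioi (0:ℝ))).withDensity
          (fun x => ENNReal.ofReal (fisherF m₁ ms₁ Ω₁ x)))
    (hY : Measure.map Y P
      = (volume.restrict (Ioi (0:ℝ))).withDensity
          (fun y => ENNReal.ofReal (fisherF m₂ ms₂ Ω₂ y))) :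
    ∫ ω, Real.sqrt (X ω) * Real.sqrt (Y ω) ∂P
      = (eulerBeta (m₁ + 1/2) (ms₁ - 1/2) * eulerBeta (m₂ + 1/2) (ms₂ - 1/2) /
          (eulerBeta m₁ ms₁ * eulerBeta m₂ ms₂)) *
        (m₁ * m₂ / ((ms₁ - 1) * (ms₂ - 1) * Ω₁ * Ω₂)) ^ (-(1:ℝ)/2) := by
  have hXaem := aemeasurable_of_map hm₁ hms₁ hΩ₁ hX
  have hYaem := aemeasurable_of_map hm₂ hms₂ hΩ₂ hY
  have hsX : AEStronglyMeasurable (fun ω => Real.sqrt (X ω)) P :=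
    (Real.continuous_sqrt.measurable.comp_aemeasurable hXaem).aestronglyMeasurable
  have hsY : AEStronglyMeasurable (fun ω => Real.sqrt (Y ω)) P :=
    (Real.continuous_sqrt.measurable.comp_aemeasurable hYaem).aestronglyMeasurable
  have hindep : IndepFun (fun ω => Real.sqrt (X ω)) (fun ω => Real.sqrt (Y ω)) P :=
    hXY.comp Real.continuous_sqrt.measurable Real.continuous_sqrt.measurable
  rw [hindep.integral_fun_mul_eq_mul_integral hsX hsY, expect_sqrt hm₁ hms₁ hΩ₁ hXaem hX,
    expect_sqrt hm₂ hms₂ hΩ₂ hYaem hY]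
  have hc₁ : (0:ℝ) < (ms₁ - 1) * Ω₁ := by
    have : (0:ℝ) < ms₁ - 1 := by linarith
    positivity
  have hc₂ : (0:ℝ) < (ms₂ - 1) * Ω₂ := by
    have : (0:ℝ) < ms₂ - 1 := by linarith
    positivity
  have hB₁ := eulerBeta_pos hm₁ (show (0:ℝ) < ms₁ by linarith)
  have hB₂ := eulerBeta_pos hm₂ (show (0:ℝ) < ms₂ by linarith)
  have hD : (0:ℝ) < (ms₁ - 1) * (ms₂ - 1) * Ω₁ * Ω₂ := by
    have h1 : (0:ℝ) < ms₁ - 1 := by linarith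
    have h2 : (0:ℝ) < ms₂ - 1 := by linarith
    positivity
  have hr : (m₁ * m₂ / ((ms₁ - 1) * (ms₂ - 1) * Ω₁ * Ω₂)) ^ (-(1:ℝ)/2)
      = ((ms₁-1)*Ω₁/m₁) ^ ((1:ℝ)/2) * ((ms₂-1)*Ω₂/m₂) ^ ((1:ℝ)/2) := by
    rw [← Real.mul_rpow (div_nonneg hc₁.le hm₁.le) (div_nonneg hc₂.le hm₂.le),
      show (-(1:ℝ)/2) = -(1/2) by ring,
      Real.rpow_neg (div_nonneg (by positivity) hD.le),
      ← Real.inv_rpow (div_nonneg (by positivity) hD.le), inv_div]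
    congr 1
    field_simp
  rw [hr]
  field_simp
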